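/- Let A and B be densely defined operators in a complex Hilbert space H, with B closed, injective, having range all of H, and with inverse B⁻¹ a bounded everywhere-defined operator on H. Then (AB)* = B*A*. In particular this holds when B is unitary. -/

import Mathlib

open LinearPMap

variable {H : Type*} [NormedAddCommGroup H] [InnerProductSpace ℂ H] [CompleteSpace H]

/-- The graph of the unbounded-operator product `A ∘ B`,
i.e. the linear relation `{(x, z) : ∃ y, (x, y) ∈ graph B ∧ (y, z) ∈ graph A}`. -/
noncomputable def LinearPMap.productGraph (A B : H →ₗ.[ℂ] H) : Submodule ℂ (H × H) where
  carrier := {p : H × H | ∃ y : H, (p.1, y) ∈ B.graph ∧ (y, p.2) ∈ A.graph}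
  add_mem' := by
    rintro p q ⟨y, hy1, hy2⟩ ⟨z, hz1, hz2⟩
    exact ⟨y + z, add_mem hy1 hz1, add_mem hy2 hz2⟩
  zero_mem' := ⟨0, zero_mem _, zero_mem _⟩
  smul_mem' := by
    rintro c p ⟨y, hy1, hy2⟩
    exact ⟨c • y, Submodule.smul_mem _ c hy1, Submodule.smul_mem _ c hy2⟩

/-- The product (composition) `A ∘ B` of two unbounded operators: its domain is
`{x ∈ D(B) : B x ∈ D(A)}` and it sends `x` to `A (B x)`. -/
noncomputable def LinearPMap.product (A B : H →ₗ.[ℂ] H) : H →ₗ.[ℂ] H :=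
  (A.productGraph B).toLinearPMap

/-- An unbounded operator is normal if it is densely defined, closed and `T*T = TT*`
(equality of unbounded operators, including equality of domains). -/
def LinearPMap.IsNormalOp (T : H →ₗ.[ℂ] H) : Prop :=
  Dense (T.domain : Set H) ∧ T.IsClosed ∧ (T†).product T = T.product (T†)

/-- `B` is relatively bounded with respect to `T` (`B` is `T`-bounded): `D(T) ⊆ D(B)` and
`‖B x‖ ≤ a ‖x‖ + b ‖T x‖` on `D(T)` for some constants `a, b ≥ 0`. -/
def LinearPMap.IsRelativelyBounded (B T : H →ₗ.[ℂ] H) : Prop :=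
  T.domain ≤ B.domain ∧ ∃ a b : ℝ, 0 ≤ a ∧ 0 ≤ b ∧
    ∀ (x : H) (hxT : x ∈ T.domain) (hxB : x ∈ B.domain),
      ‖B ⟨x, hxB⟩‖ ≤ a * ‖x‖ + b * ‖T ⟨x, hxT⟩‖

local notation "⟪" x ", " y "⟫" => @inner ℂ _ _ x y

theorem LinearPMap.product_graph_eq (A B : H →ₗ.[ℂ] H) :
    (A.product B).graph = A.productGraph B := by
  apply Submodule.toLinearPMap_graph_eq
  rintro z ⟨m, hm1, hm2⟩ h0
  exact A.graph_fst_eq_zero_snd hm2 (B.graph_fst_eq_zero_snd hm1 h0)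

theorem LinearPMap.mem_product_graph {A B : H →ₗ.[ℂ] H} {x z : H} :
    (x, z) ∈ (A.product B).graph ↔ ∃ y, (x, y) ∈ B.graph ∧ (y, z) ∈ A.graph := by
  rw [product_graph_eq]; rfl

theorem LinearPMap.mem_adjoint_graph_iff {T : H →ₗ.[ℂ] H} (hT : Dense (T.domain : Set H))
    {y w : H} : (y, w) ∈ (T†).graph ↔ ∀ x z : H, (x, z) ∈ T.graph → ⟪w, x⟫ = ⟪y, z⟫ := by
  constructor
  · intro h x z hxz
    rw [mem_graph_iff] at h hxz
    obtain ⟨u, hu1, hu2⟩ := h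
    obtain ⟨v, hv1, hv2⟩ := hxz
    simp only at hu1 hu2 hv1 hv2
    have := adjoint_isFormalAdjoint hT u v
    rw [hu2, hu1, hv1, hv2] at this
    exact this
  · intro h
    have h' : ∀ x : T.domain, ⟪w, (x : H)⟫ = ⟪y, T x⟫ := fun x =>
      h x (T x) (T.mem_graph x)
    have hy : y ∈ (T†).domain := mem_adjoint_domain_of_exists y ⟨w, h'⟩
    rw [mem_graph_iff]
    exact ⟨⟨y, hy⟩, rfl, adjoint_apply_eq hT ⟨y, hy⟩ h'⟩

/-- If `A`, `B` are densely defined, `B` is closed, injective, surjective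
with bounded everywhere-defined inverse, then `(AB)* = B*A*`. -/
theorem statement7 (A B : H →ₗ.[ℂ] H)
    (hA : Dense (A.domain : Set H)) (hB : Dense (B.domain : Set H))
    (hBcl : B.IsClosed) (hinj : LinearMap.ker B.toFun = ⊥)
    (hsurj : LinearMap.range B.toFun = ⊤)
    (C : H →L[ℂ] H) (hC : ∀ x : B.domain, C (B x) = x) :
    (A.product B)† = (B†).product (A†) := by
  -- C is also a right inverse of B
  have hCB : ∀ y : H, ∃ h : C y ∈ B.domain, (C y, y) ∈ B.graph := by
    intro y
    obtain ⟨x, hx⟩ := LinearMap.range_eq_top.1 hsurj y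
    have hxy : C y = (x : H) := by rw [← hx]; exact hC x
    refine ⟨hxy ▸ x.2, ?_⟩
    rw [mem_graph_iff]
    exact ⟨x, hxy.symm, hx⟩
  set P := A.product B with hPdef
  -- for z ∈ D(A), (C z, A z) ∈ P.graph
  have hCz : ∀ z : A.domain, (C (z : H), A z) ∈ P.graph := by
    intro z
    rw [mem_product_graph]
    exact ⟨z, (hCB z).2, A.mem_graph z⟩
  -- density of P.domain
  have hP : Dense (P.domain : Set H) := by
    rw [Submodule.dense_iff_topologicalClosure_eq_top,
      Submodule.topologicalClosure_eq_top_iff]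
    rw [Submodule.eq_bot_iff]
    intro v hv
    have h1 : ∀ z : A.domain, ⟪(z : H), (ContinuousLinearMap.adjoint C) v⟫ = 0 := by
      intro z
      rw [ContinuousLinearMap.adjoint_inner_right]
      exact hv _ (mem_domain_of_mem_graph (hCz z))
    have hCv : (ContinuousLinearMap.adjoint C) v = 0 := hA.eq_zero_of_inner_right ℂ fun z hz => h1 ⟨z, hz⟩
    refine hB.eq_zero_of_inner_right ℂ fun x' hx' => ?_
    obtain ⟨x, rfl⟩ : ∃ x : B.domain, (x : H) = x' := ⟨⟨x', hx'⟩, rfl⟩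
    have hx : (x : H) = C (B x) := (hC x).symm
    rw [hx, ← ContinuousLinearMap.adjoint_inner_right, hCv, inner_zero_right]
  apply eq_of_eq_graph
  apply Submodule.ext
  rintro ⟨y, w⟩
  rw [mem_adjoint_graph_iff hP, mem_product_graph]
  constructor
  · intro h
    refine ⟨ContinuousLinearMap.adjoint C w, ?_, ?_⟩
    · rw [mem_adjoint_graph_iff hA]
      intro x z hxz
      rw [mem_graph_iff] at hxz
      obtain ⟨v, hv1, hv2⟩ := hxz
      simp only at hv1 hv2
      rw [ContinuousLinearMap.adjoint_inner_left, ← hv1, ← hv2]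
      exact h _ _ (hCz v)
    · rw [mem_adjoint_graph_iff hB]
      intro x z hxz
      rw [mem_graph_iff] at hxz
      obtain ⟨v, hv1, hv2⟩ := hxz
      simp only at hv1 hv2
      rw [← hv1, ← hv2, ContinuousLinearMap.adjoint_inner_left, hC v]
  · rintro ⟨u, hu1, hu2⟩
    rw [mem_adjoint_graph_iff hA] at hu1
    rw [mem_adjoint_graph_iff hB] at hu2
    intro x z hxz
    obtain ⟨m, hm1, hm2⟩ := mem_product_graph.1 hxz
    rw [hu2 x m hm1, hu1 m z hm2]
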